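/- Let S be a linearly independent subset of a ℚ-vector space and Σ a finite subset of the cone ℚ≥0·S. If α, β ∈ Σ are positive rational multiples of two distinct elements of S, then the cone ℚ≥0·α + ℚ≥0·β is a face of the cone generated by Σ. -/

import Mathlib

variable {V : Type*} [AddCommGroup V] [Module ℚ V]

/-- The cone of all finite nonnegative rational combinations of elements of `S`. -/
def coneGen (S : Set V) : Set V :=
  {v | ∃ c : V →₀ ℚ, (↑c.support ⊆ S) ∧ (∀ s, 0 ≤ c s) ∧ v = c.sum fun s q => q • s}

/-- `F` is a face of the cone `C` (as sets). -/
def IsFaceOfSet (F C : Set V) : Prop :=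
  F ⊆ C ∧ ∀ x ∈ C, ∀ y ∈ C, x + y ∈ F → x ∈ F ∧ y ∈ F

lemma coneGen_zero (T : Set V) : (0 : V) ∈ coneGen T :=
  ⟨0, by simp, fun s => le_refl 0, by simp⟩

lemma coneGen_mem_of_mem {T : Set V} {s : V} (hs : s ∈ T) : s ∈ coneGen T := by
  classical
  refine ⟨Finsupp.single s 1, ?_, ?_, ?_⟩
  · intro v hv
    have : v = s := by
      have := Finsupp.support_single_subset (a := s) (b := (1:ℚ)) hv
      simpa using this
    simpa [this] using hs
  · intro t
    rw [Finsupp.single_apply]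
    split <;> norm_num
  · rw [Finsupp.sum_single_index (zero_smul ℚ s), one_smul]

lemma coneGen_add {T : Set V} {x y : V} (hx : x ∈ coneGen T) (hy : y ∈ coneGen T) :
    x + y ∈ coneGen T := by
  classical
  obtain ⟨c, hcs, hc0, rfl⟩ := hx
  obtain ⟨d, hds, hd0, rfl⟩ := hy
  refine ⟨c + d, ?_, ?_, ?_⟩
  · intro v hv
    rcases Finset.mem_union.mp (Finsupp.support_add hv) with h | h
    exacts [hcs h, hds h]
  · intro s
    simp only [Finsupp.add_apply]
    exact add_nonneg (hc0 s) (hd0 s)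
  · rw [Finsupp.sum_add_index' (fun s => zero_smul ℚ s) (fun s a b => add_smul a b s)]

lemma coneGen_smul {T : Set V} {x : V} {q : ℚ} (hq : 0 ≤ q) (hx : x ∈ coneGen T) :
    q • x ∈ coneGen T := by
  classical
  obtain ⟨c, hcs, hc0, rfl⟩ := hx
  refine ⟨q • c, ?_, ?_, ?_⟩
  · exact subset_trans (Finset.coe_subset.mpr Finsupp.support_smul) hcs
  · intro s
    simp only [Finsupp.smul_apply, smul_eq_mul]
    exact mul_nonneg hq (hc0 s)
  · rw [Finsupp.sum_smul_index (fun s => zero_smul ℚ s), Finsupp.smul_sum]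
    exact Finsupp.sum_congr fun s _ => (mul_smul q (c s) s).symm

lemma coneGen_subset {T U : Set V} (h : T ⊆ coneGen U) :
    coneGen T ⊆ coneGen U := by
  classical
  rintro x ⟨c, hcs, hc0, rfl⟩
  rw [Finsupp.sum]
  exact Finset.sum_induction _ (· ∈ coneGen U) (fun a b ha hb => coneGen_add ha hb)
    (coneGen_zero U) (fun v hv => coneGen_smul (hc0 v) (h (hcs hv)))

lemma rep_unique {S : Set V} (hS : LinearIndependent ℚ (Subtype.val : S → V))
    {c d : V →₀ ℚ} (hc : ↑c.support ⊆ S) (hd : ↑d.support ⊆ S)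
    (h : (c.sum fun s q => q • s) = d.sum fun s q => q • s) : c = d := by
  classical
  have key := linearIndepOn_iff.mp (linearIndependent_subtype_iff.mp hS) (c - d) ?_ ?_
  · exact sub_eq_zero.mp key
  · rw [Finsupp.mem_supported]
    intro v hv
    rcases Finset.mem_union.mp (Finsupp.support_sub hv) with h' | h'
    exacts [hc h', hd h']
  · rw [Finsupp.linearCombination_apply]
    have : ((c - d).sum fun s q => q • s) = 0 := by
      rw [Finsupp.sum_sub_index (fun s a b => sub_smul a b s), h, sub_self]
    simpa using this

lemma smul_add_smul_mem {α β : V} {a b : ℚ} (ha : 0 ≤ a) (hb : 0 ≤ b) :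
    a • α + b • β ∈ coneGen ({α, β} : Set V) :=
  coneGen_add (coneGen_smul ha (coneGen_mem_of_mem (by simp)))
    (coneGen_smul hb (coneGen_mem_of_mem (by simp)))

/-- If `α, β` are positive multiples of two distinct elements of a linearly
independent set `S` and belong to a finite subset `Sig` of the cone generated by
`S`, then `ℚ≥0·α + ℚ≥0·β` is a face of the cone generated by `Sig`. -/
theorem coneGen_pair_isFaceOf (S : Set V)
    (hS : LinearIndependent ℚ (Subtype.val : S → V))
    (Sig : Set V) (hSfin : Sig.Finite) (hSsub : Sig ⊆ coneGen S)
    (α β : V) (hα : α ∈ Sig) (hβ : β ∈ Sig)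
    (s₁ s₂ : V) (hs₁ : s₁ ∈ S) (hs₂ : s₂ ∈ S) (hne : s₁ ≠ s₂)
    (q₁ q₂ : ℚ) (hq₁ : 0 < q₁) (hq₂ : 0 < q₂)
    (hα' : α = q₁ • s₁) (hβ' : β = q₂ • s₂) :
    IsFaceOfSet (coneGen {α, β}) (coneGen Sig) := by
  classical
  have hpair : ({α, β} : Set V) ⊆ coneGen Sig := by
    rintro v (rfl | rfl)
    exacts [coneGen_mem_of_mem hα, coneGen_mem_of_mem hβ]
  have hSigS : coneGen Sig ⊆ coneGen S := coneGen_subset hSsub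
  have hαβ : α ≠ β := by
    intro h
    have h1 : ((Finsupp.single s₁ q₁).sum fun s q => q • s)
        = (Finsupp.single s₂ q₂).sum fun s q => q • s := by
      rw [Finsupp.sum_single_index (zero_smul ℚ s₁), Finsupp.sum_single_index (zero_smul ℚ s₂),
        ← hα', ← hβ', h]
    have h2 := rep_unique hS (c := Finsupp.single s₁ q₁) (d := Finsupp.single s₂ q₂)
      (by intro v hv
          have : v = s₁ := by simpa using Finsupp.support_single_subset hv
          simpa [this] using hs₁)
      (by intro v hv
          have : v = s₂ := by simpa using Finsupp.support_single_subset hv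
          simpa [this] using hs₂) h1
    have := DFunLike.congr_fun h2 s₁
    rw [Finsupp.single_eq_same, Finsupp.single_eq_of_ne' (Ne.symm hne)] at this
    exact absurd this hq₁.ne'
  constructor
  · exact coneGen_subset hpair
  · intro x hx y hy hxy
    obtain ⟨c, hcS, hc0, hxc⟩ := hSigS hx
    obtain ⟨d, hdS, hd0, hyd⟩ := hSigS hy
    obtain ⟨e, heAB, he0, hxye⟩ := hxy
    -- express x + y over S
    have hesupp : e.support ⊆ ({α, β} : Finset V) := by
      intro v hv
      have := heAB hv
      simpa using this
    have hxy2 : x + y = (e α * q₁) • s₁ + (e β * q₂) • s₂ := by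
      rw [hxye, Finsupp.sum_of_support_subset e hesupp _ (fun i _ => zero_smul ℚ i),
        Finset.sum_pair hαβ, hα', hβ', smul_smul, smul_smul]
    set f : V →₀ ℚ := Finsupp.single s₁ (e α * q₁) + Finsupp.single s₂ (e β * q₂) with hf
    have hfS : ↑f.support ⊆ S := by
      intro v hv
      rcases Finset.mem_union.mp (Finsupp.support_add hv) with h | h
      · have : v = s₁ := by simpa using Finsupp.support_single_subset h
        simpa [this] using hs₁
      · have : v = s₂ := by simpa using Finsupp.support_single_subset h
        simpa [this] using hs₂
    have hfsum : (f.sum fun s q => q • s) = (e α * q₁) • s₁ + (e β * q₂) • s₂ := by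
      rw [hf, Finsupp.sum_add_index' (fun s => zero_smul ℚ s) (fun s a b => add_smul a b s),
        Finsupp.sum_single_index (zero_smul ℚ s₁), Finsupp.sum_single_index (zero_smul ℚ s₂)]
    have hcdS : ↑(c + d).support ⊆ S := by
      intro v hv
      rcases Finset.mem_union.mp (Finsupp.support_add hv) with h | h
      exacts [hcS h, hdS h]
    have hcdsum : ((c + d).sum fun s q => q • s) = f.sum fun s q => q • s := by
      rw [Finsupp.sum_add_index' (fun s => zero_smul ℚ s) (fun s a b => add_smul a b s),
        ← hxc, ← hyd, hfsum, hxy2]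
    have hcd : c + d = f := rep_unique hS hcdS hfS hcdsum
    -- coefficients away from s₁, s₂ vanish
    have hzero : ∀ s, s ≠ s₁ → s ≠ s₂ → c s = 0 ∧ d s = 0 := by
      intro s h1 h2
      have hf0 : f s = 0 := by
        rw [hf, Finsupp.add_apply, Finsupp.single_eq_of_ne' (Ne.symm h1),
          Finsupp.single_eq_of_ne' (Ne.symm h2), add_zero]
      have hsum0 : c s + d s = 0 := by
        have := DFunLike.congr_fun hcd s
        rwa [Finsupp.add_apply, hf0] at this
      constructor
      · linarith [hc0 s, hd0 s]
      · linarith [hc0 s, hd0 s]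
    -- a general lemma: any nonneg rep supported in {s₁,s₂} yields membership
    have key : ∀ (g : V →₀ ℚ), (∀ s, 0 ≤ g s) → (∀ s, s ≠ s₁ → s ≠ s₂ → g s = 0) →
        (g.sum fun s q => q • s) ∈ coneGen ({α, β} : Set V) := by
      intro g hg0 hgz
      have hsupp : g.support ⊆ ({s₁, s₂} : Finset V) := by
        intro v hv
        by_contra hmem
        simp only [Finset.mem_insert, Finset.mem_singleton, not_or] at hmem
        exact (Finsupp.mem_support_iff.mp hv) (hgz v hmem.1 hmem.2)
      have hsum : (g.sum fun s q => q • s) = g s₁ • s₁ + g s₂ • s₂ := by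
        rw [Finsupp.sum_of_support_subset g hsupp _ (fun i _ => zero_smul ℚ i),
          Finset.sum_pair hne]
      have hs1 : g s₁ • s₁ = (g s₁ * q₁⁻¹) • α := by
        rw [hα', smul_smul, mul_assoc, inv_mul_cancel₀ hq₁.ne', mul_one]
      have hs2 : g s₂ • s₂ = (g s₂ * q₂⁻¹) • β := by
        rw [hβ', smul_smul, mul_assoc, inv_mul_cancel₀ hq₂.ne', mul_one]
      rw [hsum, hs1, hs2]
      exact smul_add_smul_mem (mul_nonneg (hg0 s₁) (by positivity))
        (mul_nonneg (hg0 s₂) (by positivity))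
    constructor
    · rw [hxc]
      exact key c hc0 fun s h1 h2 => (hzero s h1 h2).1
    · rw [hyd]
      exact key d hd0 fun s h1 h2 => (hzero s h1 h2).2
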